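/- Klein–Gordon extra decay estimate: suppose v: R × R^2 → R is smooth and satisfies -□v + v = F, with -□ = -∂_t^2 + Δ. Then there is an absolute constant C such that for all (t,x) with t ≥ 1 and |x| ≤ 3t, |v(t,x)| ≤ C ( (|t-|x||/t) |∂∂v| + (1/t) |∂Γv| + (1/t) |∂v| + |F| )(t,x), where |∂∂v| = Σ_{α,β} |∂_α∂_β v|, |∂Γv| = Σ_{α, a} |∂_α L_a v|, and |∂v| = Σ_α |∂_α v|. -/

import Mathlib

noncomputable section

/-- Partial derivative in the `i`-th coordinate on `ℝ^{1+2}` (coordinates `(t, x₁, x₂)`). -/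
def pd (i : Fin 3) (u : (Fin 3 → ℝ) → ℝ) : (Fin 3 → ℝ) → ℝ :=
  fun p => fderiv ℝ u p (Pi.single i 1)

/-- Lorentz boost `L_a u = x_a ∂_t u + t ∂_a u`. -/
def Lb (a : Fin 3) (u : (Fin 3 → ℝ) → ℝ) : (Fin 3 → ℝ) → ℝ :=
  fun p => p a * pd 0 u p + p 0 * pd a u p

lemma pd_smooth {v : (Fin 3 → ℝ) → ℝ} (hv : ContDiff ℝ (⊤ : ℕ∞) v) (j : Fin 3) :
    ContDiff ℝ (⊤ : ℕ∞) (pd j v) := by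
  have h := (hv.fderiv_right (m := (⊤ : ℕ∞)) (by exact_mod_cast le_rfl))
  exact h.clm_apply contDiff_const

lemma pd_pd_eq {v : (Fin 3 → ℝ) → ℝ} (hv : ContDiff ℝ (⊤ : ℕ∞) v) (i j : Fin 3)
    (p : Fin 3 → ℝ) :
    pd i (pd j v) p = (fderiv ℝ (fderiv ℝ v) p) (Pi.single i 1) (Pi.single j 1) := by
  have hdiff : DifferentiableAt ℝ (fderiv ℝ v) p :=
    ((hv.fderiv_right (m := (⊤ : ℕ∞)) (by exact_mod_cast le_rfl)).differentiable
      (by simp)) p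
  have h := fderiv_clm_apply (c := fderiv ℝ v) (u := fun _ => Pi.single j (1:ℝ)) hdiff
    (differentiableAt_const _)
  show (fderiv ℝ (fun q => (fderiv ℝ v q) (Pi.single j (1:ℝ))) p) (Pi.single i 1) = _
  have h2 : fderiv ℝ (fun q => (fderiv ℝ v q) (Pi.single j (1:ℝ))) p =
      (fderiv ℝ v p).comp (fderiv ℝ (fun _ : Fin 3 → ℝ => Pi.single j (1:ℝ)) p) +
      (fderiv ℝ (fderiv ℝ v) p).flip (Pi.single j 1) := h
  rw [h2]
  simp

lemma pd_symm {v : (Fin 3 → ℝ) → ℝ} (hv : ContDiff ℝ (⊤ : ℕ∞) v) (i j : Fin 3)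
    (p : Fin 3 → ℝ) : pd i (pd j v) p = pd j (pd i v) p := by
  rw [pd_pd_eq hv, pd_pd_eq hv]
  have hd : Differentiable ℝ v := hv.differentiable (by simp)
  have hdv : DifferentiableAt ℝ (fderiv ℝ v) p :=
    ((hv.fderiv_right (m := (⊤ : ℕ∞)) (by exact_mod_cast le_rfl)).differentiable
      (by simp)) p
  exact second_derivative_symmetric (fun y => (hd y).hasFDerivAt) hdv.hasFDerivAt _ _

lemma pd_Lb {v : (Fin 3 → ℝ) → ℝ} (hv : ContDiff ℝ (⊤ : ℕ∞) v) (a α : Fin 3)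
    (p : Fin 3 → ℝ) :
    pd α (Lb a v) p = (Pi.single α (1:ℝ) : Fin 3 → ℝ) a * pd 0 v p + p a * pd α (pd 0 v) p
      + (Pi.single α (1:ℝ) : Fin 3 → ℝ) 0 * pd a v p + p 0 * pd α (pd a v) p := by
  have h0 : HasFDerivAt (pd 0 v) (fderiv ℝ (pd 0 v) p) p :=
    (((pd_smooth hv 0).differentiable (by simp)) p).hasFDerivAt
  have ha : HasFDerivAt (pd a v) (fderiv ℝ (pd a v) p) p :=
    (((pd_smooth hv a).differentiable (by simp)) p).hasFDerivAt
  have hproj : ∀ b : Fin 3, HasFDerivAt (fun q : Fin 3 → ℝ => q b)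
      (ContinuousLinearMap.proj b : (Fin 3 → ℝ) →L[ℝ] ℝ) p :=
    fun b => (ContinuousLinearMap.proj (R := ℝ) (φ := fun _ : Fin 3 => ℝ) b).hasFDerivAt
  have H : HasFDerivAt (Lb a v)
      ((p a • fderiv ℝ (pd 0 v) p + pd 0 v p • ContinuousLinearMap.proj a)
        + (p 0 • fderiv ℝ (pd a v) p + pd a v p • ContinuousLinearMap.proj 0)) p :=
    ((hproj a).mul h0).add ((hproj 0).mul ha)
  have : pd α (Lb a v) p = _ := congrFun (congrArg _ H.fderiv) (Pi.single α 1)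
  rw [this]
  simp only [ContinuousLinearMap.add_apply, ContinuousLinearMap.smul_apply,
    ContinuousLinearMap.proj_apply, smul_eq_mul, pd]
  ring

set_option maxHeartbeats 1000000 in
/-- Extra decay for Klein-Gordon components: if `-□v + v = F`
(with `-□ = -∂_t² + Δ`) then, in the region `{t ≥ 1, |x| ≤ 3t}`,
`|v| ≲ (|t-r|/t) |∂∂v| + (1/t) |∂Γv| + (1/t) |∂v| + |F|`. -/
theorem klein_gordon_extra_decay :
    ∃ C : ℝ, 0 < C ∧ ∀ (v F : (Fin 3 → ℝ) → ℝ), ContDiff ℝ (⊤ : ℕ∞) v →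
      (∀ p, F p = -pd 0 (pd 0 v) p + pd 1 (pd 1 v) p + pd 2 (pd 2 v) p + v p) →
      ∀ p : Fin 3 → ℝ, 1 ≤ p 0 → Real.sqrt ((p 1) ^ 2 + (p 2) ^ 2) ≤ 3 * p 0 →
        |v p| ≤ C *
          ((|p 0 - Real.sqrt ((p 1) ^ 2 + (p 2) ^ 2)| / p 0) *
              ∑ α : Fin 3, ∑ β : Fin 3, |pd α (pd β v) p|
            + (1 / p 0) * ∑ α : Fin 3, (|pd α (Lb 1 v) p| + |pd α (Lb 2 v) p|)
            + (1 / p 0) * ∑ α : Fin 3, |pd α v p|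
            + |F p|) := by
  refine ⟨4, by norm_num, ?_⟩
  intro v F hv hF p ht hr3
  set t : ℝ := p 0 with htdef
  set r : ℝ := Real.sqrt ((p 1) ^ 2 + (p 2) ^ 2) with hrdef
  have ht0 : (0:ℝ) < t := lt_of_lt_of_le one_pos ht
  have hr0 : (0:ℝ) ≤ r := Real.sqrt_nonneg _
  have hr2 : r ^ 2 = (p 1) ^ 2 + (p 2) ^ 2 := Real.sq_sqrt (by positivity)
  have hp1 : |p 1| ≤ r := by
    rw [← Real.sqrt_sq_eq_abs]
    exact Real.sqrt_le_sqrt (by nlinarith [sq_nonneg (p 2)])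
  have hp2 : |p 2| ≤ r := by
    rw [← Real.sqrt_sq_eq_abs]
    exact Real.sqrt_le_sqrt (by nlinarith [sq_nonneg (p 1)])
  -- boost derivative relations
  have hG1 : pd 1 (Lb 1 v) p = pd 0 v p + p 1 * pd 0 (pd 1 v) p + t * pd 1 (pd 1 v) p := by
    rw [pd_Lb hv 1 1 p, pd_symm hv 1 0]
    simp [Pi.single_apply, htdef]
  have hG2 : pd 2 (Lb 2 v) p = pd 0 v p + p 2 * pd 0 (pd 2 v) p + t * pd 2 (pd 2 v) p := by
    rw [pd_Lb hv 2 2 p, pd_symm hv 2 0]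
    simp [Pi.single_apply, htdef]
  have hH1 : pd 0 (Lb 1 v) p = p 1 * pd 0 (pd 0 v) p + pd 1 v p + t * pd 0 (pd 1 v) p := by
    rw [pd_Lb hv 1 0 p]
    simp [Pi.single_apply, htdef]
  have hH2 : pd 0 (Lb 2 v) p = p 2 * pd 0 (pd 0 v) p + pd 2 v p + t * pd 0 (pd 2 v) p := by
    rw [pd_Lb hv 2 0 p]
    simp [Pi.single_apply, htdef]
  have hFp := hF p
  -- the key identity
  have hid : t ^ 2 * v p = t ^ 2 * F p + ((t - r) * (t + r)) * pd 0 (pd 0 v) p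
      - t * pd 1 (Lb 1 v) p - t * pd 2 (Lb 2 v) p + 2 * t * pd 0 v p
      + p 1 * pd 0 (Lb 1 v) p + p 2 * pd 0 (Lb 2 v) p
      - p 1 * pd 1 v p - p 2 * pd 2 v p := by
    have hfac : (t - r) * (t + r) = t ^ 2 - (p 1) ^ 2 - (p 2) ^ 2 := by nlinarith [hr2]
    rw [hfac]
    linear_combination (-(t ^ 2)) * hFp + t * hG1 + t * hG2 - p 1 * hH1 - p 2 * hH2
  -- abbreviations for the three sums
  set S2 : ℝ := ∑ α : Fin 3, ∑ β : Fin 3, |pd α (pd β v) p| with hS2def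
  set SG : ℝ := ∑ α : Fin 3, (|pd α (Lb 1 v) p| + |pd α (Lb 2 v) p|) with hSGdef
  set S1 : ℝ := ∑ α : Fin 3, |pd α v p| with hS1def
  have hA : |pd 0 (pd 0 v) p| ≤ S2 := by
    rw [hS2def]
    simp only [Fin.sum_univ_three]
    have := abs_nonneg (pd 0 (pd 1 v) p); have := abs_nonneg (pd 0 (pd 2 v) p)
    have := abs_nonneg (pd 1 (pd 0 v) p); have := abs_nonneg (pd 1 (pd 1 v) p)
    have := abs_nonneg (pd 1 (pd 2 v) p); have := abs_nonneg (pd 2 (pd 0 v) p)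
    have := abs_nonneg (pd 2 (pd 1 v) p); have := abs_nonneg (pd 2 (pd 2 v) p)
    linarith
  have hSG : |pd 1 (Lb 1 v) p| + |pd 2 (Lb 2 v) p| + |pd 0 (Lb 1 v) p| + |pd 0 (Lb 2 v) p|
      ≤ SG := by
    rw [hSGdef]
    simp only [Fin.sum_univ_three]
    have := abs_nonneg (pd 1 (Lb 2 v) p); have := abs_nonneg (pd 2 (Lb 1 v) p)
    linarith
  have hS1 : S1 = |pd 0 v p| + |pd 1 v p| + |pd 2 v p| := by
    rw [hS1def]; simp [Fin.sum_univ_three]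
  -- reduce to the inequality multiplied by t^2
  have key : t ^ 2 * |v p| ≤ t ^ 2 * (4 * ((|t - r| / t) * S2 + (1 / t) * SG
      + (1 / t) * S1 + |F p|)) := by
    have hrhs : t ^ 2 * (4 * ((|t - r| / t) * S2 + (1 / t) * SG + (1 / t) * S1 + |F p|))
        = 4 * (t * |t - r| * S2 + t * SG + t * S1 + t ^ 2 * |F p|) := by
      field_simp
    rw [hrhs]
    have hL : t ^ 2 * |v p| = |t ^ 2 * v p| := by
      rw [abs_mul, abs_of_nonneg (by positivity : (0:ℝ) ≤ t ^ 2)]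
    rw [hL, hid]
    -- triangle inequality
    have tri : |t ^ 2 * F p + ((t - r) * (t + r)) * pd 0 (pd 0 v) p
        - t * pd 1 (Lb 1 v) p - t * pd 2 (Lb 2 v) p + 2 * t * pd 0 v p
        + p 1 * pd 0 (Lb 1 v) p + p 2 * pd 0 (Lb 2 v) p
        - p 1 * pd 1 v p - p 2 * pd 2 v p|
        ≤ |t ^ 2 * F p| + |((t - r) * (t + r)) * pd 0 (pd 0 v) p|
          + |t * pd 1 (Lb 1 v) p| + |t * pd 2 (Lb 2 v) p| + |2 * t * pd 0 v p|
          + |p 1 * pd 0 (Lb 1 v) p| + |p 2 * pd 0 (Lb 2 v) p|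
          + |p 1 * pd 1 v p| + |p 2 * pd 2 v p| := by
      calc |t ^ 2 * F p + ((t - r) * (t + r)) * pd 0 (pd 0 v) p
        - t * pd 1 (Lb 1 v) p - t * pd 2 (Lb 2 v) p + 2 * t * pd 0 v p
        + p 1 * pd 0 (Lb 1 v) p + p 2 * pd 0 (Lb 2 v) p
        - p 1 * pd 1 v p - p 2 * pd 2 v p|
          ≤ |t ^ 2 * F p + ((t - r) * (t + r)) * pd 0 (pd 0 v) p
            - t * pd 1 (Lb 1 v) p - t * pd 2 (Lb 2 v) p + 2 * t * pd 0 v p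
            + p 1 * pd 0 (Lb 1 v) p + p 2 * pd 0 (Lb 2 v) p
            - p 1 * pd 1 v p| + |p 2 * pd 2 v p| := abs_sub _ _
        _ ≤ |t ^ 2 * F p + ((t - r) * (t + r)) * pd 0 (pd 0 v) p
            - t * pd 1 (Lb 1 v) p - t * pd 2 (Lb 2 v) p + 2 * t * pd 0 v p
            + p 1 * pd 0 (Lb 1 v) p + p 2 * pd 0 (Lb 2 v) p|
            + |p 1 * pd 1 v p| + |p 2 * pd 2 v p| :=
          by gcongr; exact abs_sub _ _
        _ ≤ |t ^ 2 * F p + ((t - r) * (t + r)) * pd 0 (pd 0 v) p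
            - t * pd 1 (Lb 1 v) p - t * pd 2 (Lb 2 v) p + 2 * t * pd 0 v p
            + p 1 * pd 0 (Lb 1 v) p| + |p 2 * pd 0 (Lb 2 v) p|
            + |p 1 * pd 1 v p| + |p 2 * pd 2 v p| :=
          by gcongr; exact abs_add_le _ _
        _ ≤ |t ^ 2 * F p + ((t - r) * (t + r)) * pd 0 (pd 0 v) p
            - t * pd 1 (Lb 1 v) p - t * pd 2 (Lb 2 v) p + 2 * t * pd 0 v p|
            + |p 1 * pd 0 (Lb 1 v) p| + |p 2 * pd 0 (Lb 2 v) p|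
            + |p 1 * pd 1 v p| + |p 2 * pd 2 v p| :=
          by gcongr; exact abs_add_le _ _
        _ ≤ |t ^ 2 * F p + ((t - r) * (t + r)) * pd 0 (pd 0 v) p
            - t * pd 1 (Lb 1 v) p - t * pd 2 (Lb 2 v) p| + |2 * t * pd 0 v p|
            + |p 1 * pd 0 (Lb 1 v) p| + |p 2 * pd 0 (Lb 2 v) p|
            + |p 1 * pd 1 v p| + |p 2 * pd 2 v p| :=
          by gcongr; exact abs_add_le _ _
        _ ≤ |t ^ 2 * F p + ((t - r) * (t + r)) * pd 0 (pd 0 v) p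
            - t * pd 1 (Lb 1 v) p| + |t * pd 2 (Lb 2 v) p| + |2 * t * pd 0 v p|
            + |p 1 * pd 0 (Lb 1 v) p| + |p 2 * pd 0 (Lb 2 v) p|
            + |p 1 * pd 1 v p| + |p 2 * pd 2 v p| :=
          by gcongr; exact abs_sub _ _
        _ ≤ |t ^ 2 * F p + ((t - r) * (t + r)) * pd 0 (pd 0 v) p|
            + |t * pd 1 (Lb 1 v) p| + |t * pd 2 (Lb 2 v) p| + |2 * t * pd 0 v p|
            + |p 1 * pd 0 (Lb 1 v) p| + |p 2 * pd 0 (Lb 2 v) p|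
            + |p 1 * pd 1 v p| + |p 2 * pd 2 v p| :=
          by gcongr; exact abs_sub _ _
        _ ≤ |t ^ 2 * F p| + |((t - r) * (t + r)) * pd 0 (pd 0 v) p|
            + |t * pd 1 (Lb 1 v) p| + |t * pd 2 (Lb 2 v) p| + |2 * t * pd 0 v p|
            + |p 1 * pd 0 (Lb 1 v) p| + |p 2 * pd 0 (Lb 2 v) p|
            + |p 1 * pd 1 v p| + |p 2 * pd 2 v p| :=
          by gcongr; exact abs_add_le _ _
    refine tri.trans ?_
    -- rewrite the absolute values of products
    have e1 : |t ^ 2 * F p| = t ^ 2 * |F p| := by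
      rw [abs_mul, abs_of_nonneg (by positivity : (0:ℝ) ≤ t ^ 2)]
    have e2 : |((t - r) * (t + r)) * pd 0 (pd 0 v) p|
        = |t - r| * (t + r) * |pd 0 (pd 0 v) p| := by
      rw [abs_mul, abs_mul, abs_of_nonneg (by positivity : (0:ℝ) ≤ t + r)]
    have e3 : |t * pd 1 (Lb 1 v) p| = t * |pd 1 (Lb 1 v) p| := by
      rw [abs_mul, abs_of_nonneg ht0.le]
    have e4 : |t * pd 2 (Lb 2 v) p| = t * |pd 2 (Lb 2 v) p| := by
      rw [abs_mul, abs_of_nonneg ht0.le]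
    have e5 : |2 * t * pd 0 v p| = 2 * t * |pd 0 v p| := by
      rw [abs_mul, abs_of_nonneg (by positivity : (0:ℝ) ≤ 2 * t)]
    have e6 : |p 1 * pd 0 (Lb 1 v) p| ≤ r * |pd 0 (Lb 1 v) p| := by
      rw [abs_mul]; exact mul_le_mul_of_nonneg_right hp1 (abs_nonneg _)
    have e7 : |p 2 * pd 0 (Lb 2 v) p| ≤ r * |pd 0 (Lb 2 v) p| := by
      rw [abs_mul]; exact mul_le_mul_of_nonneg_right hp2 (abs_nonneg _)
    have e8 : |p 1 * pd 1 v p| ≤ r * |pd 1 v p| := by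
      rw [abs_mul]; exact mul_le_mul_of_nonneg_right hp1 (abs_nonneg _)
    have e9 : |p 2 * pd 2 v p| ≤ r * |pd 2 v p| := by
      rw [abs_mul]; exact mul_le_mul_of_nonneg_right hp2 (abs_nonneg _)
    -- product estimates
    have P1 : |t - r| * ((t + r) * |pd 0 (pd 0 v) p|) ≤ |t - r| * (4 * t * S2) := by
      refine mul_le_mul_of_nonneg_left ?_ (abs_nonneg _)
      exact mul_le_mul (by linarith) hA (abs_nonneg _) (by positivity)
    have P2 : t * (|pd 1 (Lb 1 v) p| + |pd 2 (Lb 2 v) p| + |pd 0 (Lb 1 v) p|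
        + |pd 0 (Lb 2 v) p|) ≤ t * SG := mul_le_mul_of_nonneg_left hSG ht0.le
    have P3a : r * |pd 0 (Lb 1 v) p| ≤ 3 * t * |pd 0 (Lb 1 v) p| :=
      mul_le_mul_of_nonneg_right hr3 (abs_nonneg _)
    have P3b : r * |pd 0 (Lb 2 v) p| ≤ 3 * t * |pd 0 (Lb 2 v) p| :=
      mul_le_mul_of_nonneg_right hr3 (abs_nonneg _)
    have P3c : r * |pd 1 v p| ≤ 3 * t * |pd 1 v p| :=
      mul_le_mul_of_nonneg_right hr3 (abs_nonneg _)
    have P3d : r * |pd 2 v p| ≤ 3 * t * |pd 2 v p| :=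
      mul_le_mul_of_nonneg_right hr3 (abs_nonneg _)
    have n1 : 0 ≤ t * |pd 1 (Lb 1 v) p| := by positivity
    have n2 : 0 ≤ t * |pd 2 (Lb 2 v) p| := by positivity
    have n3 : 0 ≤ t * |pd 0 (Lb 1 v) p| := by positivity
    have n4 : 0 ≤ t * |pd 0 (Lb 2 v) p| := by positivity
    have n5 : 0 ≤ t * |pd 0 v p| := by positivity
    have n6 : 0 ≤ t * |pd 1 v p| := by positivity
    have n7 : 0 ≤ t * |pd 2 v p| := by positivity
    have n8 : 0 ≤ t ^ 2 * |F p| := by positivity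
    rw [e1, e2, hS1]
    linarith [P1, P2, P3a, P3b, P3c, P3d, e3, e4, e5, e6, e7, e8, e9]
  exact le_of_mul_le_mul_left key (by positivity)
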